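/- Let N be a positive integer, D a negative fundamental discriminant, and β an integer with β² ≡ D (mod 4N). Let (A,B,C) and (A',B',C') be Heegner forms of level N and discriminant D with B ≡ β (mod 2N) and B' ≡ β (mod 2N). If there exists γ ∈ SL₂(ℤ) with (A,B,C)·γ = (A',B',C'), then there exists δ ∈ Γ₀(N) with (A,B,C)·δ = (A',B',C'). In other words, SL₂(ℤ)-equivalent Heegner forms with the same square root β of D modulo 2N are already Γ₀(N)-equivalent. -/
import Mathlib


/-- A Heegner form of level `N` and discriminant `D`. -/
def IsHeegnerForm (N D A B C : ℤ) : Prop :=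
  0 < A ∧ Int.gcd A (Int.gcd B C : ℤ) = 1 ∧ B ^ 2 - 4 * A * C = D ∧ N ∣ A ∧
    Int.gcd (A / N) (Int.gcd B (C * N) : ℤ) = 1

/-- A negative fundamental discriminant. -/
def IsFundamentalDiscriminant (D : ℤ) : Prop :=
  D < 0 ∧ ((D % 4 = 1 ∧ Squarefree D) ∨
    (D % 4 = 0 ∧ Squarefree (D / 4) ∧ (D / 4 % 4 = 2 ∨ D / 4 % 4 = 3)))

/-- `SL₂(ℤ)`-equivalent Heegner forms of level `N` and fundamental discriminant
`D` sharing the same square root `β` of `D` modulo `2N` are already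
`Γ₀(N)`-equivalent. -/
theorem sl2_equivalent_heegner_forms_gamma0_equivalent
    (N D β : ℤ) (hN : 0 < N)
    (hfund : IsFundamentalDiscriminant D)
    (hβ : β ^ 2 ≡ D [ZMOD 4 * N])
    (A B C A' B' C' : ℤ)
    (h : IsHeegnerForm N D A B C) (h' : IsHeegnerForm N D A' B' C')
    (hB : B ≡ β [ZMOD 2 * N]) (hB' : B' ≡ β [ZMOD 2 * N])
    (hequiv : ∃ a b c d : ℤ, a * d - b * c = 1 ∧
      (A * a ^ 2 + B * a * c + C * c ^ 2,
       2 * A * a * b + B * (a * d + b * c) + 2 * C * c * d,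
       A * b ^ 2 + B * b * d + C * d ^ 2) = (A', B', C')) :
    ∃ a b c d : ℤ, a * d - b * c = 1 ∧ N ∣ c ∧
      (A * a ^ 2 + B * a * c + C * c ^ 2,
       2 * A * a * b + B * (a * d + b * c) + 2 * C * c * d,
       A * b ^ 2 + B * b * d + C * d ^ 2) = (A', B', C') := by
  obtain ⟨a, b, c, d, hdet, heq⟩ := hequiv
  simp only [Prod.mk.injEq] at heq
  obtain ⟨e1, e2, e3⟩ := heq
  obtain ⟨hApos, hgcd, hdisc, hNA, -⟩ := h
  obtain ⟨-, -, -, hNA', -⟩ := h'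
  -- B' ≡ B (mod 2N)
  have hBB' : (2 * N) ∣ B' - B := (hB.trans hB'.symm).dvd
  -- N divides c*(a*B + c*C)
  have h1 : N ∣ c * (a * B + c * C) := by
    have hd : N ∣ A' - A * a ^ 2 := dvd_sub hNA' (hNA.mul_right _)
    have : c * (a * B + c * C) = A' - A * a ^ 2 := by rw [← e1]; ring
    rwa [this]
  -- N divides c*(b*B + d*C)
  have h2 : N ∣ c * (b * B + d * C) := by
    have hd2 : (2 * N) ∣ 2 * (A * a * b + c * (b * B + d * C)) := by
      have : 2 * (A * a * b + c * (b * B + d * C)) = B' - B := by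
        rw [← e2]; linear_combination (-(B : ℤ)) * hdet
      rwa [this]
    have hN2 : N ∣ A * a * b + c * (b * B + d * C) :=
      (mul_dvd_mul_iff_left (two_ne_zero (α := ℤ))).mp hd2
    have : c * (b * B + d * C) = (A * a * b + c * (b * B + d * C)) - A * a * b := by ring
    rw [this]
    exact dvd_sub hN2 ((hNA.mul_right a).mul_right b)
  -- hence N ∣ c*B and N ∣ c*C
  have h3 : N ∣ c * B := by
    have : c * B = d * (c * (a * B + c * C)) - c * (c * (b * B + d * C)) := by
      linear_combination (-(c * B)) * hdet
    rw [this]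
    exact dvd_sub (h1.mul_left d) (h2.mul_left c)
  have h4 : N ∣ c * C := by
    have : c * C = a * (c * (b * B + d * C)) - b * (c * (a * B + c * C)) := by
      linear_combination (-(c * C)) * hdet
    rw [this]
    exact dvd_sub (h2.mul_left a) (h1.mul_left b)
  have h5 : N ∣ c * A := hNA.mul_left c
  -- N divides c * gcd B C
  have h6 : N ∣ c * (Int.gcd B C : ℤ) := by
    have hg : (Int.gcd B C : ℤ) = B * Int.gcdA B C + C * Int.gcdB B C := Int.gcd_eq_gcd_ab B C
    have : c * (Int.gcd B C : ℤ) = (c * B) * Int.gcdA B C + (c * C) * Int.gcdB B C := by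
      rw [hg]; ring
    rw [this]
    exact dvd_add (h3.mul_right _) (h4.mul_right _)
  -- coprimality gives N ∣ c
  have hco : IsCoprime A (Int.gcd B C : ℤ) := Int.isCoprime_iff_gcd_eq_one.mpr hgcd
  obtain ⟨u, v, huv⟩ := hco
  have hc : N ∣ c := by
    have : c = u * (c * A) + v * (c * (Int.gcd B C : ℤ)) := by
      linear_combination (-c) * huv
    rw [this]
    exact dvd_add (h5.mul_left u) (h6.mul_left v)
  exact ⟨a, b, c, d, hdet, hc, by rw [e1, e2, e3]⟩
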